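/- Let F be a nonempty compact convex subset of ℝⁿ. Then there is a subset A ⊆ ℝⁿ whose complement is Lebesgue null such that for every c ∈ A there exist a point x_c ∈ F and a constant δ_c > 0 with ⟨c, x_c⟩ ≥ ⟨c, x⟩ + δ_c ‖x − x_c‖² for all x ∈ F; that is, x_c is a strong (hence unique) maximizer of ⟨c,·⟩ over F. -/

import Mathlib

open MeasureTheory Set
open scoped RealInnerProductSpace

namespace AeSMaux

variable {n : ℕ} {F : Set (EuclideanSpace ℝ (Fin n))}

noncomputable def sfn (F : Set (EuclideanSpace ℝ (Fin n))) (c : EuclideanSpace ℝ (Fin n)) : ℝ :=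
  sSup ((fun x => ⟪c, x⟫) '' F)

lemma bddAbove_img (hcomp : IsCompact F) (c : EuclideanSpace ℝ (Fin n)) :
    BddAbove ((fun x => ⟪c, x⟫) '' F) :=
  (hcomp.image (continuous_const.inner continuous_id)).bddAbove

lemma le_sfn (hcomp : IsCompact F) {x : EuclideanSpace ℝ (Fin n)} (hx : x ∈ F)
    (c : EuclideanSpace ℝ (Fin n)) : ⟪c, x⟫ ≤ sfn F c :=
  le_csSup (bddAbove_img hcomp c) (mem_image_of_mem _ hx)

lemma sfn_le (hne : F.Nonempty) {c : EuclideanSpace ℝ (Fin n)} {B : ℝ}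
    (hub : ∀ x ∈ F, ⟪c, x⟫ ≤ B) : sfn F c ≤ B :=
  csSup_le (hne.image _) (by rintro _ ⟨x, hx, rfl⟩; exact hub x hx)

lemma exists_sfn_eq (hne : F.Nonempty) (hcomp : IsCompact F) (c : EuclideanSpace ℝ (Fin n)) :
    ∃ y ∈ F, sfn F c = ⟪c, y⟫ := by
  have hc : ContinuousOn (fun x => ⟪c, x⟫) F :=
    (continuous_const.inner continuous_id).continuousOn
  obtain ⟨y, hy, hmax⟩ := hcomp.exists_isMaxOn hne hc
  refine ⟨y, hy, le_antisymm (sfn_le hne fun x hx => hmax hx) (le_sfn hcomp hy c)⟩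


lemma sfn_convexOn (hne : F.Nonempty) (hcomp : IsCompact F) :
    ConvexOn ℝ Set.univ (sfn F) := by
  refine ⟨convex_univ, fun c₁ _ c₂ _ a b ha hb hab => ?_⟩
  refine sfn_le hne fun x hx => ?_
  have h1 : ⟪c₁, x⟫ ≤ sfn F c₁ := le_sfn hcomp hx c₁
  have h2 : ⟪c₂, x⟫ ≤ sfn F c₂ := le_sfn hcomp hx c₂
  have : ⟪a • c₁ + b • c₂, x⟫ = a * ⟪c₁, x⟫ + b * ⟪c₂, x⟫ := by
    rw [inner_add_left, real_inner_smul_left, real_inner_smul_left]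
  rw [this]
  have := add_le_add (mul_le_mul_of_nonneg_left h1 ha) (mul_le_mul_of_nonneg_left h2 hb)
  simpa [smul_eq_mul] using this

lemma sfn_sub_le (hne : F.Nonempty) (hcomp : IsCompact F) {K : ℝ}
    (hK : ∀ x ∈ F, ‖x‖ ≤ K) (c c' : EuclideanSpace ℝ (Fin n)) :
    sfn F c ≤ sfn F c' + K * ‖c - c'‖ := by
  refine sfn_le hne fun x hx => ?_
  have h1 : ⟪c, x⟫ = ⟪c', x⟫ + ⟪c - c', x⟫ := by rw [inner_sub_left]; ring
  have h2 : ⟪c - c', x⟫ ≤ ‖c - c'‖ * ‖x‖ := real_inner_le_norm _ _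
  have h3 : ‖c - c'‖ * ‖x‖ ≤ ‖c - c'‖ * K := by
    exact mul_le_mul_of_nonneg_left (hK x hx) (norm_nonneg _)
  have := le_sfn hcomp hx c'
  rw [h1]
  nlinarith [norm_nonneg (c - c')]

lemma sfn_continuous (hne : F.Nonempty) (hcomp : IsCompact F) {K : ℝ}
    (hK : ∀ x ∈ F, ‖x‖ ≤ K) : Continuous (sfn F) := by
  have hK0 : 0 ≤ K := by
    obtain ⟨x, hx⟩ := hne
    exact le_trans (norm_nonneg x) (hK x hx)
  have : LipschitzWith (Real.toNNReal K) (sfn F) := by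
    apply LipschitzWith.of_dist_le_mul
    intro c c'
    rw [Real.dist_eq, abs_sub_le_iff]
    constructor
    · have := sfn_sub_le hne hcomp hK c c'
      rw [Real.coe_toNNReal K hK0, dist_eq_norm]
      linarith
    · have := sfn_sub_le hne hcomp hK c' c
      rw [norm_sub_rev] at this
      rw [Real.coe_toNNReal K hK0, dist_eq_norm]
      linarith
  exact this.continuous

lemma sfn_lower (hcomp : IsCompact F) {x₀ : EuclideanSpace ℝ (Fin n)} (hx₀ : x₀ ∈ F)
    {K : ℝ} (hK : ∀ x ∈ F, ‖x‖ ≤ K) (q : EuclideanSpace ℝ (Fin n)) :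
    -(K * ‖q‖) ≤ sfn F q := by
  refine le_trans ?_ (le_sfn hcomp hx₀ q)
  have := real_inner_le_norm q (-x₀)
  have h2 : ‖(-x₀ : EuclideanSpace ℝ (Fin n))‖ ≤ K := by simpa using hK x₀ hx₀
  have h3 : ⟪q, -x₀⟫ = -⟪q, x₀⟫ := by simp
  nlinarith [norm_nonneg q]

/-- Existence of a global minimizer of `q ↦ sfn F q + ‖q - v‖² / 2`. -/
lemma exists_prox (hne : F.Nonempty) (hcomp : IsCompact F) {K : ℝ}
    (hK : ∀ x ∈ F, ‖x‖ ≤ K) (v : EuclideanSpace ℝ (Fin n)) :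
    ∃ u : EuclideanSpace ℝ (Fin n), ∀ q,
      sfn F u + ‖u - v‖ ^ 2 / 2 ≤ sfn F q + ‖q - v‖ ^ 2 / 2 := by
  obtain ⟨x₀, hx₀⟩ := id hne
  have hK0 : 0 ≤ K := le_trans (norm_nonneg x₀) (hK x₀ hx₀)
  have hfc : Continuous (fun q : EuclideanSpace ℝ (Fin n) => sfn F q + ‖q - v‖ ^ 2 / 2) := by
    apply (sfn_continuous hne hcomp hK).add
    continuity
  set R : ℝ := 2 * K + 2 + 2 * K * ‖v‖ with hR
  have hR2 : 2 ≤ R := by nlinarith [norm_nonneg v]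
  have hvmem : v ∈ Metric.closedBall v R := by
    simp [Metric.mem_closedBall]; positivity
  obtain ⟨u, hu_mem, hu⟩ := (isCompact_closedBall v R).exists_isMinOn
    ⟨v, hvmem⟩ hfc.continuousOn
  refine ⟨u, fun q => ?_⟩
  by_cases hq : q ∈ Metric.closedBall v R
  · exact hu hq
  · have hd : R < ‖q - v‖ := by
      simpa [Metric.mem_closedBall, dist_eq_norm] using hq
    have h1 : sfn F u + ‖u - v‖ ^ 2 / 2 ≤ sfn F v + ‖v - v‖ ^ 2 / 2 := hu hvmem
    have h2 : sfn F v ≤ K * ‖v‖ := by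
      refine sfn_le hne fun x hx => ?_
      have := real_inner_le_norm v x
      nlinarith [hK x hx, norm_nonneg v, norm_nonneg x]
    have h3 : -(K * ‖q‖) ≤ sfn F q := sfn_lower hcomp hx₀ hK q
    have h4 : ‖q‖ ≤ ‖q - v‖ + ‖v‖ := by
      have := norm_add_le (q - v) v; simpa using this
    have key : K * ‖v‖ < -(K * ‖q‖) + ‖q - v‖ ^ 2 / 2 := by
      have hd2 : (2:ℝ) ≤ ‖q - v‖ := by linarith
      have hdR : ‖q - v‖ * R ≤ ‖q - v‖ ^ 2 := by nlinarith
      nlinarith [mul_le_mul_of_nonneg_left h4 hK0, hdR,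
        mul_le_mul_of_nonneg_right hd2 (mul_nonneg hK0 (norm_nonneg v))]
    have hvv : ‖v - v‖ = (0:ℝ) := by simp
    nlinarith [norm_nonneg (u - v)]


lemma prox_strong (hne : F.Nonempty) (hcomp : IsCompact F)
    {v u : EuclideanSpace ℝ (Fin n)}
    (hu : ∀ q, sfn F u + ‖u - v‖ ^ 2 / 2 ≤ sfn F q + ‖q - v‖ ^ 2 / 2)
    (q : EuclideanSpace ℝ (Fin n)) :
    sfn F u + ‖u - v‖ ^ 2 / 2 + ‖q - u‖ ^ 2 / 4 ≤ sfn F q + ‖q - v‖ ^ 2 / 2 := by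
  set m : EuclideanSpace ℝ (Fin n) := (2:ℝ)⁻¹ • (q + u) with hm
  have hmid_s : sfn F m ≤ (sfn F q + sfn F u) / 2 := by
    refine sfn_le hne fun x hx => ?_
    have h1 := le_sfn hcomp hx q
    have h2 := le_sfn hcomp hx u
    have : ⟪m, x⟫ = (2:ℝ)⁻¹ * (⟪q, x⟫ + ⟪u, x⟫) := by
      rw [hm, real_inner_smul_left, inner_add_left]
    rw [this]; linarith
  have hmv : m - v = (2:ℝ)⁻¹ • ((q - v) + (u - v)) := by
    rw [hm]; module
  have hpar : ‖m - v‖ ^ 2 = ‖q - v‖ ^ 2 / 2 + ‖u - v‖ ^ 2 / 2 - ‖q - u‖ ^ 2 / 4 := by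
    have hqu : q - u = (q - v) - (u - v) := by module
    have e1 : ‖(q - v) + (u - v)‖ ^ 2
        = ‖q - v‖ ^ 2 + 2 * ⟪q - v, u - v⟫ + ‖u - v‖ ^ 2 := norm_add_sq_real _ _
    have e2 : ‖q - u‖ ^ 2 = ‖q - v‖ ^ 2 - 2 * ⟪q - v, u - v⟫ + ‖u - v‖ ^ 2 := by
      rw [hqu]; exact norm_sub_sq_real _ _
    have e3 : ‖m - v‖ ^ 2 = (2:ℝ)⁻¹ ^ 2 * ‖(q - v) + (u - v)‖ ^ 2 := by
      rw [hmv, norm_smul]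
      simp [mul_pow]
    rw [e3, e1]; rw [e2]; ring
  have := hu m
  nlinarith

lemma prox_unique (hne : F.Nonempty) (hcomp : IsCompact F)
    {v u₁ u₂ : EuclideanSpace ℝ (Fin n)}
    (h1 : ∀ q, sfn F u₁ + ‖u₁ - v‖ ^ 2 / 2 ≤ sfn F q + ‖q - v‖ ^ 2 / 2)
    (h2 : ∀ q, sfn F u₂ + ‖u₂ - v‖ ^ 2 / 2 ≤ sfn F q + ‖q - v‖ ^ 2 / 2) :
    u₁ = u₂ := by
  have ha := prox_strong hne hcomp h1 u₂
  have hb := h2 u₁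
  have : ‖u₂ - u₁‖ ^ 2 ≤ 0 := by nlinarith
  have : ‖u₂ - u₁‖ = 0 := by nlinarith [norm_nonneg (u₂ - u₁)]
  have := norm_sub_eq_zero_iff.mp this
  exact this.symm

lemma prox_key (hne : F.Nonempty) (hcomp : IsCompact F)
    {v u : EuclideanSpace ℝ (Fin n)}
    (hu : ∀ q, sfn F u + ‖u - v‖ ^ 2 / 2 ≤ sfn F q + ‖q - v‖ ^ 2 / 2)
    (q : EuclideanSpace ℝ (Fin n)) :
    sfn F u + ⟪v - u, q - u⟫ - ‖q - u‖ ^ 2 / 4 ≤ sfn F q := by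
  have h := prox_strong hne hcomp hu q
  have hid : ‖u - v‖ ^ 2 - ‖q - v‖ ^ 2 = 2 * ⟪v - u, q - u⟫ - ‖q - u‖ ^ 2 := by
    have e1 : q - v = (q - u) - (v - u) := by module
    have e2 : u - v = -(v - u) := by module
    have e3 : ‖q - v‖ ^ 2 = ‖q - u‖ ^ 2 - 2 * ⟪q - u, v - u⟫ + ‖v - u‖ ^ 2 := by
      rw [e1]; exact norm_sub_sq_real _ _
    have e4 : ‖u - v‖ ^ 2 = ‖v - u‖ ^ 2 := by rw [e2, norm_neg]
    rw [e3, e4, real_inner_comm (v - u) (q - u)]; ring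
  nlinarith

lemma prox_lip (hne : F.Nonempty) (hcomp : IsCompact F)
    {v v' u u' : EuclideanSpace ℝ (Fin n)}
    (hu : ∀ q, sfn F u + ‖u - v‖ ^ 2 / 2 ≤ sfn F q + ‖q - v‖ ^ 2 / 2)
    (hu' : ∀ q, sfn F u' + ‖u' - v'‖ ^ 2 / 2 ≤ sfn F q + ‖q - v'‖ ^ 2 / 2) :
    ‖u - u'‖ ≤ 2 * ‖v - v'‖ := by
  have h1 := prox_key hne hcomp hu u'
  have h2 := prox_key hne hcomp hu' u
  have hid : ⟪v - u, u' - u⟫ + ⟪v' - u', u - u'⟫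
      = ⟪v - v', u' - u⟫ + ‖u' - u‖ ^ 2 := by
    have e1 : ⟪v' - u', u - u'⟫ = -⟪v' - u', u' - u⟫ := by
      rw [← inner_neg_right]; congr 1; module
    rw [e1]
    have e2 : ⟪v - u, u' - u⟫ - ⟪v' - u', u' - u⟫ = ⟪(v - u) - (v' - u'), u' - u⟫ := by
      simp [inner_sub_left]
    have e3 : (v - u) - (v' - u') = (v - v') + (u' - u) := by module
    rw [show ⟪v - u, u' - u⟫ - ⟪v' - u', u' - u⟫ = ⟪v - u, u' - u⟫ + -⟪v' - u', u' - u⟫ by ring] at e2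
    rw [e2, e3, inner_add_left, real_inner_self_eq_norm_sq]
  have hqu : ‖u - u'‖ = ‖u' - u‖ := norm_sub_rev _ _
  have hcs : ⟪v' - v, u' - u⟫ ≤ ‖v' - v‖ * ‖u' - u‖ := real_inner_le_norm _ _
  have hsign : ⟪v - v', u' - u⟫ = -⟪v' - v, u' - u⟫ := by
    rw [← inner_neg_left]; congr 1; module
  have hvv : ‖v' - v‖ = ‖v - v'‖ := norm_sub_rev _ _
  nlinarith [norm_nonneg (u' - u), norm_nonneg (v - v')]

lemma prox_fix (hne : F.Nonempty) (hcomp : IsCompact F)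
    {c y : EuclideanSpace ℝ (Fin n)} (hy : y ∈ F) (hmax : sfn F c = ⟪c, y⟫) :
    ∀ q, sfn F c + ‖c - (c + y)‖ ^ 2 / 2 ≤ sfn F q + ‖q - (c + y)‖ ^ 2 / 2 := by
  intro q
  have h1 : ⟪q, y⟫ ≤ sfn F q := le_sfn hcomp hy q
  have h2 : ‖c - (c + y)‖ = ‖y‖ := by
    rw [show c - (c + y) = -y by module, norm_neg]
  have h3 : q - (c + y) = (q - c) - y := by module
  have h4 : ‖(q - c) - y‖ ^ 2 = ‖q - c‖ ^ 2 - 2 * ⟪q - c, y⟫ + ‖y‖ ^ 2 :=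
    norm_sub_sq_real _ _
  have h5 : ⟪q - c, y⟫ = ⟪q, y⟫ - ⟪c, y⟫ := by rw [inner_sub_left]
  rw [h2, h3, h4, hmax, h5]
  nlinarith [sq_nonneg ‖q - c‖]


set_option maxHeartbeats 1000000 in
lemma core (hne : F.Nonempty) (hcomp : IsCompact F) (hn : 0 < n)
    {P : EuclideanSpace ℝ (Fin n) → EuclideanSpace ℝ (Fin n)}
    (hP : ∀ v q, sfn F (P v) + ‖P v - v‖ ^ 2 / 2 ≤ sfn F q + ‖q - v‖ ^ 2 / 2)
    {v₀ : EuclideanSpace ℝ (Fin n)} (hdiff : DifferentiableAt ℝ P v₀)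
    (hdet : (fderiv ℝ P v₀).det ≠ 0) :
    ∃ C > (0:ℝ), ∃ r > (0:ℝ), ∀ w, ‖w‖ ≤ r →
      sfn F (P v₀ + w) ≤ sfn F (P v₀) + ⟪v₀ - P v₀, w⟫ + C * ‖w‖ ^ 2 := by
  classical
  set u₀ := P v₀ with hu₀
  set s₀ := v₀ - u₀ with hs₀
  obtain ⟨A, hAfun⟩ : ∃ A : EuclideanSpace ℝ (Fin n) ≃L[ℝ] EuclideanSpace ℝ (Fin n),
      ∀ z, A z = fderiv ℝ P v₀ z :=
    ⟨(fderiv ℝ P v₀).toContinuousLinearEquivOfDetNeZero hdet, fun z => by simp⟩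
  set M : ℝ := ‖(A.symm : EuclideanSpace ℝ (Fin n) →L[ℝ] EuclideanSpace ℝ (Fin n))‖ + 1 with hM
  have hM0 : 0 < M := by positivity
  set sq : ℝ := Real.sqrt n + 1 with hsq
  have hsq0 : 0 < sq := by positivity
  set cst : ℝ := 1 / (2 * sq * M) with hcst
  have hcst0 : 0 < cst := by positivity
  set dlt : ℝ := cst / 2 with hdlt
  set a : ℝ := cst / 4 with ha
  have ha0 : 0 < a := by rw [ha]; positivity
  have hdlt0 : 0 < dlt := by rw [hdlt]; positivity
  -- little-o control on P near v₀
  have hlo := hasFDerivAt_iff_isLittleO_nhds_zero.mp hdiff.hasFDerivAt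
  have hev := Asymptotics.isLittleO_iff.mp hlo hdlt0
  obtain ⟨ε, hε0, hball⟩ := Metric.eventually_nhds_iff.mp hev
  have happrox : ∀ z : EuclideanSpace ℝ (Fin n), ‖z‖ < ε →
      ‖P (v₀ + z) - u₀ - A z‖ ≤ dlt * ‖z‖ := by
    intro z hz
    have h1 : dist z 0 < ε := by simpa [dist_zero_right] using hz
    have h2 := hball h1
    simpa [hu₀, hAfun z] using h2
  -- Lipschitz control on P
  have hplip : ∀ z : EuclideanSpace ℝ (Fin n), ‖P (v₀ + z) - u₀‖ ≤ 2 * ‖z‖ := by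
    intro z
    have := prox_lip hne hcomp (fun q => hP (v₀ + z) q) (fun q => hP v₀ q)
    rw [hu₀]
    simpa using this
  -- quadratic upper bound along proximal images
  have qimg : ∀ z : EuclideanSpace ℝ (Fin n),
      sfn F (P (v₀ + z)) ≤ sfn F u₀ + ⟪s₀, P (v₀ + z) - u₀⟫ + 3 * ‖z‖ ^ 2 := by
    intro z
    have hkey := prox_key hne hcomp (fun q => hP (v₀ + z) q) u₀
    set u' := P (v₀ + z) with hu'
    set p := u' - u₀ with hp
    have hpl : ‖p‖ ≤ 2 * ‖z‖ := hplip z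
    have hinner : ⟪v₀ + z - u', u₀ - u'⟫ = -⟪s₀, p⟫ - ⟪z, p⟫ + ‖p‖ ^ 2 := by
      have e1 : v₀ + z - u' = s₀ + z - p := by rw [hs₀, hp]; module
      have e2 : u₀ - u' = -p := by rw [hp]; module
      rw [e1, e2, inner_neg_right, inner_sub_left, inner_add_left,
        real_inner_self_eq_norm_sq]
      ring
    rw [hinner] at hkey
    have hzp : ⟪z, p⟫ ≤ ‖z‖ * ‖p‖ := real_inner_le_norm _ _
    have hnn : ‖u₀ - u'‖ = ‖p‖ := by rw [hp, norm_sub_rev]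
    rw [hnn] at hkey
    nlinarith [norm_nonneg p, norm_nonneg z, sq_nonneg ‖p‖,
      mul_le_mul_of_nonneg_left hpl (norm_nonneg z)]
  -- the radius and constant
  refine ⟨3 / a ^ 2, by positivity, a * (ε / 2), by positivity, ?_⟩
  intro w hw
  rcases eq_or_ne w 0 with rfl | hw0
  · simp
  have hwpos : 0 < ‖w‖ := norm_pos_iff.mpr hw0
  set ρ : ℝ := ‖w‖ / a with hρ
  have hρ0 : 0 < ρ := div_pos hwpos ha0
  have hwa : ‖w‖ = a * ρ := by rw [hρ]; field_simp
  have hρε : ρ < ε := by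
    rw [hρ]
    rw [div_lt_iff₀ ha0]
    calc ‖w‖ ≤ a * (ε / 2) := hw
    _ < ε * a := by nlinarith
  set b := EuclideanSpace.basisFun (Fin n) ℝ with hb
  have hbnorm : ∀ j : Fin n, ‖b j‖ = 1 := fun j => b.orthonormal.1 j
  set zf : Fin n × Bool → EuclideanSpace ℝ (Fin n) :=
    fun jb => (if jb.2 then ρ else -ρ) • b jb.1 with hzf
  have hznorm : ∀ jb, ‖zf jb‖ = ρ := by
    intro jb
    rw [hzf]
    simp only [norm_smul, hbnorm, mul_one, Real.norm_eq_abs]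
    rcases jb.2 with _ | _
    · simp [abs_of_pos hρ0]
    · simp [abs_of_pos hρ0]
  set pt : Fin n × Bool → EuclideanSpace ℝ (Fin n) := fun jb => P (v₀ + zf jb) with hpt
  set S : Set (EuclideanSpace ℝ (Fin n)) := Set.range pt with hS
  have hSfin : S.Finite := Set.finite_range _
  have hmem : u₀ + w ∈ convexHull ℝ S := by
    by_contra hnot
    obtain ⟨f, t, hfa, hft⟩ := geometric_hahn_banach_closed_point
      (convex_convexHull ℝ S) (hSfin.isCompact_convexHull (𝕜 := ℝ)).isClosed hnot
    obtain ⟨ν, hνx⟩ : ∃ ν : EuclideanSpace ℝ (Fin n), ∀ x, ⟪ν, x⟫ = f x :=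
      ⟨(InnerProductSpace.toDual ℝ (EuclideanSpace ℝ (Fin n))).symm f,
        fun x => InnerProductSpace.toDual_symm_apply⟩
    have hfp : ∀ jb, f (pt jb) < t := fun jb =>
      hfa _ (subset_convexHull ℝ S (Set.mem_range_self jb))
    have hν0 : ν ≠ 0 := by
      intro h0
      have hz : ∀ x, f x = 0 := by
        intro x; rw [← hνx, h0, inner_zero_left]
      have h1 := hfp ⟨⟨0, hn⟩, true⟩
      rw [hz] at h1
      rw [hz] at hft
      linarith
    have hνpos : 0 < ‖ν‖ := norm_pos_iff.mpr hν0
    -- bound on each basis direction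
    have hjb : ∀ jb, ⟪ν, A (zf jb)⟫ ≤ ‖ν‖ * ((a + dlt) * ρ) := by
      intro jb
      have e1 : ⟪ν, pt jb - u₀⟫ < ⟪ν, w⟫ := by
        have h1 : f (pt jb) < f (u₀ + w) := lt_trans (hfp jb) hft
        have h2 : ⟪ν, pt jb - u₀⟫ = f (pt jb) - f u₀ := by
          rw [inner_sub_right, hνx, hνx]
        have h3 : ⟪ν, w⟫ = f (u₀ + w) - f u₀ := by
          rw [map_add, hνx]; ring
        rw [h2, h3]
        linarith
      have hap : ‖pt jb - u₀ - A (zf jb)‖ ≤ dlt * ρ := by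
        have := happrox (zf jb) (by rw [hznorm]; exact hρε)
        rwa [hznorm] at this
      have e2 : ⟪ν, pt jb - u₀ - A (zf jb)⟫ = ⟪ν, pt jb - u₀⟫ - ⟪ν, A (zf jb)⟫ :=
        inner_sub_right _ _ _
      have e3 : -⟪ν, pt jb - u₀ - A (zf jb)⟫ ≤ ‖ν‖ * (dlt * ρ) := by
        have h4 := real_inner_le_norm ν (-(pt jb - u₀ - A (zf jb)))
        rw [norm_neg, inner_neg_right] at h4
        exact le_trans h4 (mul_le_mul_of_nonneg_left hap (norm_nonneg _))
      have e4 : ⟪ν, w⟫ ≤ ‖ν‖ * ‖w‖ := real_inner_le_norm _ _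
      rw [hwa] at e4
      have e5 : ‖ν‖ * ((a + dlt) * ρ) = ‖ν‖ * (a * ρ) + ‖ν‖ * (dlt * ρ) := by ring
      linarith
    have hjabs : ∀ j : Fin n, |⟪ν, A (b j)⟫| ≤ ‖ν‖ * (a + dlt) := by
      intro j
      have h1 := hjb ⟨j, true⟩
      have h2 := hjb ⟨j, false⟩
      have e1 : A (zf ⟨j, true⟩) = ρ • A (b j) := by
        rw [hzf]; simp [_root_.map_smul]
      have e2 : A (zf ⟨j, false⟩) = -(ρ • A (b j)) := by
        rw [hzf]; simp [_root_.map_smul]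
      rw [e1, real_inner_smul_right] at h1
      rw [e2, inner_neg_right, real_inner_smul_right] at h2
      rw [abs_le]
      constructor
      · nlinarith
      · nlinarith
    -- contradiction via Cauchy–Schwarz on coordinates
    set y := A.symm ν with hy
    have hAy : A y = ν := A.apply_symm_apply ν
    have hrepr : y = ∑ j : Fin n, ⟪b j, y⟫ • b j := (b.sum_repr' y).symm
    have hexp : ⟪ν, A y⟫ = ∑ j : Fin n, ⟪b j, y⟫ * ⟪ν, A (b j)⟫ := by
      conv_lhs => rw [hrepr]
      rw [map_sum]
      rw [inner_sum]
      congr 1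
      ext j
      rw [_root_.map_smul, real_inner_smul_right]
    have hcoord : ∀ j : Fin n, ⟪b j, y⟫ = y j := by
      intro j
      rw [hb, EuclideanSpace.basisFun_apply, EuclideanSpace.inner_single_left]
      simp
    have hnormy : ∑ j : Fin n, (y j) ^ 2 = ‖y‖ ^ 2 := by
      rw [EuclideanSpace.norm_eq]
      rw [Real.sq_sqrt (by positivity)]
      congr 1
      ext j
      rw [Real.norm_eq_abs, sq_abs]
    have hcs : (∑ j : Fin n, |y j|) ^ 2 ≤ (n : ℝ) * ‖y‖ ^ 2 := by
      have := Finset.sum_mul_sq_le_sq_mul_sq Finset.univ (fun j : Fin n => |y j|) (fun _ => 1)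
      simp only [mul_one, one_pow] at this
      calc (∑ j : Fin n, |y j|) ^ 2 ≤ (∑ j : Fin n, |y j| ^ 2) * ∑ j : Fin n, (1:ℝ) := this
      _ = (n : ℝ) * ‖y‖ ^ 2 := by
          rw [← hnormy]
          simp [sq_abs, Finset.sum_const]
          ring
    have hsumabs : ∑ j : Fin n, |y j| ≤ Real.sqrt n * ‖y‖ := by
      have h1 : (0:ℝ) ≤ Real.sqrt n * ‖y‖ := by positivity
      have h2 : (Real.sqrt n * ‖y‖) ^ 2 = (n : ℝ) * ‖y‖ ^ 2 := by
        rw [mul_pow, Real.sq_sqrt (by positivity : (0:ℝ) ≤ (n:ℝ))]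
      nlinarith [Finset.sum_nonneg (fun j (_ : j ∈ Finset.univ) => abs_nonneg (y j)), hcs]
    have hyM : ‖y‖ ≤ M * ‖ν‖ := by
      have h1 : ‖y‖ ≤ ‖(A.symm : EuclideanSpace ℝ (Fin n) →L[ℝ] EuclideanSpace ℝ (Fin n))‖ * ‖ν‖ := by
        exact (A.symm : EuclideanSpace ℝ (Fin n) →L[ℝ] EuclideanSpace ℝ (Fin n)).le_opNorm ν
      have h2 : ‖(A.symm : EuclideanSpace ℝ (Fin n) →L[ℝ] EuclideanSpace ℝ (Fin n))‖ * ‖ν‖ ≤ M * ‖ν‖ := by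
        rw [hM]
        nlinarith [norm_nonneg ν]
      linarith
    have hfinal : ‖ν‖ ^ 2 ≤ Real.sqrt n * (M * ‖ν‖) * (‖ν‖ * (a + dlt)) := by
      have h1 : ⟪ν, A y⟫ = ‖ν‖ ^ 2 := by rw [hAy, real_inner_self_eq_norm_sq]
      have h2 : ∑ j : Fin n, ⟪b j, y⟫ * ⟪ν, A (b j)⟫
          ≤ ∑ j : Fin n, |y j| * (‖ν‖ * (a + dlt)) := by
        apply Finset.sum_le_sum
        intro j _
        rw [hcoord j]
        calc y j * ⟪ν, A (b j)⟫ ≤ |y j * ⟪ν, A (b j)⟫| := le_abs_self _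
        _ = |y j| * |⟪ν, A (b j)⟫| := abs_mul _ _
        _ ≤ |y j| * (‖ν‖ * (a + dlt)) :=
            mul_le_mul_of_nonneg_left (hjabs j) (abs_nonneg _)
      rw [← h1, hexp]
      calc ∑ j : Fin n, ⟪b j, y⟫ * ⟪ν, A (b j)⟫ ≤ ∑ j : Fin n, |y j| * (‖ν‖ * (a + dlt)) := h2
      _ = (∑ j : Fin n, |y j|) * (‖ν‖ * (a + dlt)) := by rw [← Finset.sum_mul]
      _ ≤ (Real.sqrt n * ‖y‖) * (‖ν‖ * (a + dlt)) := by
          apply mul_le_mul_of_nonneg_right hsumabs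
          positivity
      _ ≤ Real.sqrt n * (M * ‖ν‖) * (‖ν‖ * (a + dlt)) := by
          have := mul_le_mul_of_nonneg_left hyM (Real.sqrt_nonneg (n:ℝ))
          apply mul_le_mul_of_nonneg_right _ (by positivity)
          nlinarith [Real.sqrt_nonneg (n:ℝ)]
    -- now derive numeric contradiction
    have hsqle : Real.sqrt n ≤ sq := by rw [hsq]; linarith [Real.sqrt_nonneg (n:ℝ)]
    have had : a + dlt = 3 / 4 * cst := by rw [ha, hdlt]; ring
    have hcstM : sq * M * cst = 1 / 2 := by
      rw [hcst]
      field_simp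
    have hlt : Real.sqrt n * (M * ‖ν‖) * (‖ν‖ * (a + dlt)) ≤ 3 / 8 * ‖ν‖ ^ 2 := by
      rw [had]
      have h1 : Real.sqrt n * M * cst ≤ sq * M * cst :=
        mul_le_mul_of_nonneg_right (mul_le_mul_of_nonneg_right hsqle (le_of_lt hM0)) (le_of_lt hcst0)
      rw [hcstM] at h1
      nlinarith [Real.sqrt_nonneg (n:ℝ), sq_nonneg ‖ν‖]
    have hcontr : ‖ν‖ ^ 2 ≤ 3 / 8 * ‖ν‖ ^ 2 := le_trans hfinal hlt
    have hq : 0 < ‖ν‖ ^ 2 := by positivity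
    linarith
  -- maximum principle over the convex hull
  have hgconv : ConvexOn ℝ Set.univ
      (fun q : EuclideanSpace ℝ (Fin n) => sfn F q - ⟪s₀, q - u₀⟫) := by
    refine ⟨convex_univ, fun c₁ _ c₂ _ α β hα hβ hαβ => ?_⟩
    have h1 := (sfn_convexOn hne hcomp).2 (Set.mem_univ c₁) (Set.mem_univ c₂) hα hβ hαβ
    have h2 : ⟪s₀, (α • c₁ + β • c₂) - u₀⟫ = α * ⟪s₀, c₁ - u₀⟫ + β * ⟪s₀, c₂ - u₀⟫ := by
      simp only [inner_sub_right, inner_add_right, real_inner_smul_right]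
      linear_combination (⟪s₀, u₀⟫ : ℝ) * hαβ
    simp only [smul_eq_mul] at h1 ⊢
    rw [h2]
    linarith [h1]
  obtain ⟨yS, hySmem, hle⟩ := hgconv.exists_ge_of_mem_convexHull (Set.subset_univ S) hmem
  obtain ⟨jb, rfl⟩ := hySmem
  have h1 : sfn F (pt jb) ≤ sfn F u₀ + ⟪s₀, pt jb - u₀⟫ + 3 * ρ ^ 2 := by
    have := qimg (zf jb)
    rwa [hznorm] at this
  have h2 : sfn F (u₀ + w) - ⟪s₀, w⟫ ≤ sfn F (pt jb) - ⟪s₀, pt jb - u₀⟫ := by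
    have e1 : u₀ + w - u₀ = w := by module
    rw [e1] at hle
    exact hle
  have h3 : 3 * ρ ^ 2 = 3 / a ^ 2 * ‖w‖ ^ 2 := by
    rw [hρ]
    field_simp
  rw [hu₀] at *
  linarith [h1, h2, h3.le, h3.ge]

lemma lipschitz_image_null {K : NNReal} {G : EuclideanSpace ℝ (Fin n) → EuclideanSpace ℝ (Fin n)}
    (hG : LipschitzWith K G) {s : Set (EuclideanSpace ℝ (Fin n))} (hs : volume s = 0) :
    volume (G '' s) = 0 := by
  set d : ℝ := (Module.finrank ℝ (EuclideanSpace ℝ (Fin n)) : ℝ) with hd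
  have hd0 : 0 ≤ d := by positivity
  have hmuv := Measure.isAddLeftInvariant_eq_smul
    (μH[d] : Measure (EuclideanSpace ℝ (Fin n))) volume
  have h1 : μH[d] s = 0 := by rw [hmuv]; simp [hs]
  have h2 : μH[d] (G '' s) ≤ (K : ENNReal) ^ d * μH[d] s := hG.hausdorffMeasure_image_le hd0 s
  have h3 : μH[d] (G '' s) = 0 := by
    refine le_antisymm ?_ zero_le
    rw [h1] at h2
    simpa using h2
  have hvmu := Measure.isAddLeftInvariant_eq_smul
    (volume : Measure (EuclideanSpace ℝ (Fin n))) μH[d]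
  rw [hvmu]; simp [h3]

lemma assemble (hne : F.Nonempty) (hcomp : IsCompact F) {K : ℝ}
    (hK : ∀ x ∈ F, ‖x‖ ≤ K) {c y : EuclideanSpace ℝ (Fin n)} (hy : y ∈ F)
    (hmax : sfn F c = ⟪c, y⟫) {C r : ℝ} (hC : 0 < C) (hr : 0 < r)
    (hq : ∀ w, ‖w‖ ≤ r → sfn F (c + w) ≤ sfn F c + ⟪y, w⟫ + C * ‖w‖ ^ 2) :
    ∃ δ > (0:ℝ), ∀ x ∈ F, ⟪c, x⟫ + δ * ‖x - y‖ ^ 2 ≤ ⟪c, y⟫ := by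
  have hK0 : 0 ≤ K := le_trans (norm_nonneg y) (hK y hy)
  set t : ℝ := min (r / (2 * K + 1)) (1 / (2 * C)) with ht
  have ht0 : 0 < t := lt_min (by positivity) (by positivity)
  refine ⟨t / 2, by positivity, fun x hx => ?_⟩
  rcases eq_or_ne x y with rfl | hxy
  · simp
  set w := t • (x - y) with hw
  have hwn : ‖w‖ = t * ‖x - y‖ := by
    rw [hw, norm_smul, Real.norm_eq_abs, abs_of_pos ht0]
  have hxyK : ‖x - y‖ ≤ 2 * K := by
    calc ‖x - y‖ ≤ ‖x‖ + ‖y‖ := norm_sub_le _ _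
    _ ≤ 2 * K := by linarith [hK x hx, hK y hy]
  have hwr : ‖w‖ ≤ r := by
    rw [hwn]
    calc t * ‖x - y‖ ≤ (r / (2 * K + 1)) * (2 * K) := by
          apply mul_le_mul (min_le_left _ _) hxyK (norm_nonneg _) (by positivity)
    _ ≤ r := by
          rw [div_mul_eq_mul_div]
          rw [div_le_iff₀ (by positivity : (0:ℝ) < 2 * K + 1)]
          nlinarith
  have h1 := hq w hwr
  have h2 : ⟪c + w, x⟫ ≤ sfn F (c + w) := le_sfn hcomp hx _
  have h3 : ⟪c + w, x⟫ = ⟪c, x⟫ + ⟪w, x⟫ := inner_add_left _ _ _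
  have h4 : ⟪w, x⟫ - ⟪y, w⟫ = t * ‖x - y‖ ^ 2 := by
    rw [real_inner_comm w y, ← inner_sub_right, hw, real_inner_smul_left,
      real_inner_self_eq_norm_sq]
  have h5 : C * ‖w‖ ^ 2 = C * t ^ 2 * ‖x - y‖ ^ 2 := by
    rw [hwn]; ring
  have htC : C * t ≤ 1 / 2 := by
    have := min_le_right (r / (2 * K + 1)) (1 / (2 * C))
    rw [← ht] at this
    rw [le_div_iff₀ (by positivity : (0:ℝ) < 2 * C)] at this
    linarith
  have hsq : 0 ≤ ‖x - y‖ ^ 2 := sq_nonneg _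
  rw [hmax] at h1
  nlinarith [h1, h2, h3, h4, h5]

end AeSMaux

open AeSMaux in
/-- Almost all linear functionals have strong maximizers: for a nonempty compact convex
set `F ⊆ ℝⁿ` there is a set `A ⊆ ℝⁿ` of full Lebesgue measure such that every `c ∈ A`
admits a strong maximizer `x_c ∈ F` with some modulus `δ_c > 0`. -/
theorem ae_strong_maximizer (n : ℕ)
    (F : Set (EuclideanSpace ℝ (Fin n)))
    (hne : F.Nonempty) (hcomp : IsCompact F) (hconv : Convex ℝ F) :
    ∃ A : Set (EuclideanSpace ℝ (Fin n)), volume Aᶜ = 0 ∧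
      ∀ c ∈ A, ∃ xc ∈ F, ∃ δc > (0 : ℝ),
        ∀ x ∈ F, (inner ℝ c x : ℝ) + δc * ‖x - xc‖ ^ 2 ≤ inner ℝ c xc := by
  classical
  rcases Nat.eq_zero_or_pos n with hn | hn
  · subst hn
    refine ⟨Set.univ, by simp, ?_⟩
    intro c _
    obtain ⟨x₀, hx₀⟩ := hne
    refine ⟨x₀, hx₀, 1, one_pos, ?_⟩
    intro x hx
    have hxx : x = x₀ := Subsingleton.elim x x₀
    subst hxx
    simp
  -- bound on F
  obtain ⟨K, hK⟩ : ∃ K : ℝ, ∀ x ∈ F, ‖x‖ ≤ K := hcomp.isBounded.exists_norm_le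
  -- maximizer choice
  choose ymax hymF hymE using fun c => exists_sfn_eq hne hcomp c
  -- proximal map
  choose P hP using fun v => exists_prox hne hcomp hK v
  have hfix : ∀ c, P (c + ymax c) = c := by
    intro c
    exact prox_unique hne hcomp (hP (c + ymax c))
      (prox_fix hne hcomp (hymF c) (hymE c))
  have hPlip : LipschitzWith 2 P := by
    apply LipschitzWith.of_dist_le_mul
    intro v v'
    rw [dist_eq_norm, dist_eq_norm]
    simpa using prox_lip hne hcomp (hP v) (hP v')
  set Z₁ : Set (EuclideanSpace ℝ (Fin n)) := {v | ¬ DifferentiableAt ℝ P v} with hZ₁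
  set Z₂ : Set (EuclideanSpace ℝ (Fin n)) :=
    {v | DifferentiableAt ℝ P v ∧ (fderiv ℝ P v).det = 0} with hZ₂
  have hZ₁null : volume Z₁ = 0 := by
    have := hPlip.ae_differentiableAt (μ := volume)
    rwa [MeasureTheory.ae_iff] at this
  have hZ₁img : volume (P '' Z₁) = 0 := lipschitz_image_null hPlip hZ₁null
  have hZ₂img : volume (P '' Z₂) = 0 := by
    apply addHaar_image_eq_zero_of_det_fderivWithin_eq_zero volume
      (f' := fun v => fderiv ℝ P v)
    · intro x hx
      exact hx.1.hasFDerivAt.hasFDerivWithinAt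
    · intro x hx
      exact hx.2
  refine ⟨(P '' Z₁ ∪ P '' Z₂)ᶜ, ?_, ?_⟩
  · rw [compl_compl]
    exact measure_union_null hZ₁img hZ₂img
  intro c hc
  rw [Set.mem_compl_iff, Set.mem_union] at hc
  push_neg at hc
  set v₀ := c + ymax c with hv₀
  have hPv₀ : P v₀ = c := hfix c
  have hdiff : DifferentiableAt ℝ P v₀ := by
    by_contra hnd
    exact hc.1 ⟨v₀, hnd, hPv₀⟩
  have hdet : (fderiv ℝ P v₀).det ≠ 0 := by
    intro h0
    exact hc.2 ⟨v₀, ⟨hdiff, h0⟩, hPv₀⟩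
  obtain ⟨C, hC, r, hr, hq⟩ := core hne hcomp hn hP hdiff hdet
  rw [hPv₀] at hq
  have hsub : v₀ - c = ymax c := by rw [hv₀]; exact add_sub_cancel_left c (ymax c)
  rw [hsub] at hq
  obtain ⟨δ, hδ, hδs⟩ := assemble hne hcomp hK (hymF c) (hymE c) hC hr hq
  exact ⟨ymax c, hymF c, δ, hδ, hδs⟩
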